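/- For 0 ≤ i ≤ d-1 and 0 ≤ j ≤ d, the h-numbers of B(i,d) are h_j = C(d,j) if j ≤ i+1 and h_j = (-1)^{j-i-1} C(d,j) if j > i+1, where h_j is defined by the relation ∑_j h_j x^{d-j} = ∑_j f_{j-1} (x-1)^{d-j} and f_{j-1} is the number of (j-1)-faces of B(i,d). -/

import Mathlib

/-- The switch set of a word `u` of length `d` over the alphabet {x,y}. -/
def sw (d : ℕ) (u : ℕ → Bool) : Finset ℕ :=
  (Finset.Ico 1 d).filter (fun j => u j ≠ u (j + 1))

/-- The facet of the boundary of the `d`-cross-polytope corresponding to the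
word `u`: vertices are pairs (position, letter). -/
def facetOf (d : ℕ) (u : ℕ → Bool) : Finset (ℕ × Bool) :=
  (Finset.Icc 1 d).image (fun j => (j, u j))

open Classical in
/-- The faces of `B(i,d)`: subsets of facets of the cross-polytope boundary
whose word has at most `i` switches. -/
noncomputable def facesB (i d : ℕ) : Finset (Finset (ℕ × Bool)) :=
  ((Finset.Icc 1 d ×ˢ (Finset.univ : Finset Bool)).powerset).filter
    (fun σ => ∃ u : ℕ → Bool, (sw d u).card ≤ i ∧ σ ⊆ facetOf d u)

/-- `fB i d k` is the number of faces of `B(i,d)` of cardinality `k`,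
i.e. the face number `f_{k-1}` (with `f_{-1} = 1`). -/
noncomputable def fB (i d k : ℕ) : ℕ :=
  ((facesB i d).filter (fun σ => σ.card = k)).card

open Finset

open Classical in
/-- consecutive differing pairs of `T` along `S` -/
noncomputable def cset (S T : Finset ℕ) : Finset (ℕ × ℕ) :=
  (S ×ˢ S).filter
    (fun pq => pq.1 < pq.2 ∧ ¬ (pq.1 ∈ T ↔ pq.2 ∈ T) ∧ ∀ r ∈ S, ¬ (pq.1 < r ∧ r < pq.2))

noncomputable def chg (S T : Finset ℕ) : ℕ := (cset S T).card

lemma mem_cset {S T : Finset ℕ} {pq : ℕ × ℕ} :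
    pq ∈ cset S T ↔ pq.1 ∈ S ∧ pq.2 ∈ S ∧ pq.1 < pq.2 ∧ ¬ (pq.1 ∈ T ↔ pq.2 ∈ T) ∧
      ∀ r ∈ S, ¬ (pq.1 < r ∧ r < pq.2) := by
  simp [cset, mem_filter, mem_product, and_assoc]

lemma mem_facetOf {d : ℕ} {u : ℕ → Bool} {p : ℕ × Bool} :
    p ∈ facetOf d u ↔ p.1 ∈ Finset.Icc 1 d ∧ p.2 = u p.1 := by
  constructor
  · intro h
    obtain ⟨j, hj, rfl⟩ := Finset.mem_image.1 h
    exact ⟨hj, rfl⟩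
  · rintro ⟨h1, h2⟩
    exact Finset.mem_image.2 ⟨p.1, h1, by rw [← h2]⟩

lemma word_const {u : ℕ → Bool} {a : ℕ} : ∀ {b : ℕ}, a ≤ b →
    (∀ j, a ≤ j → j < b → u j = u (j + 1)) → u a = u b := by
  intro b
  induction b with
  | zero => intro h _; have : a = 0 := by omega
            rw [this]
  | succ n ih =>
    intro hab h
    rcases Nat.lt_or_ge a (n+1) with h1 | h1
    · have : u a = u n := ih (by omega) (fun j hj hj' => h j hj (by omega))
      rw [this]; exact h n (by omega) (by omega)
    · have : a = n + 1 := by omega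
      rw [this]

lemma exists_switch {u : ℕ → Bool} {a b : ℕ} (hab : a ≤ b) (h : u a ≠ u b) :
    ∃ j, a ≤ j ∧ j < b ∧ u j ≠ u (j + 1) := by
  by_contra hc
  push_neg at hc
  exact h (word_const hab (fun j hj hj' => hc j hj hj'))

noncomputable def posS (σ : Finset (ℕ × Bool)) : Finset ℕ := σ.image Prod.fst

open Classical in
noncomputable def posT (σ : Finset (ℕ × Bool)) : Finset ℕ :=
  (σ.filter (fun p => p.2 = true)).image Prod.fst

open Finset

lemma mem_posT {σ : Finset (ℕ × Bool)} {a : ℕ} : a ∈ posT σ ↔ (a, true) ∈ σ := by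
  classical
  constructor
  · intro h
    obtain ⟨p, hp, rfl⟩ := Finset.mem_image.1 h
    have := Finset.mem_filter.1 hp
    have h2 : p = (p.1, true) := by
      ext
      · rfl
      · simp [this.2]
    rw [← h2]; exact this.1
  · intro h
    exact Finset.mem_image.2 ⟨(a, true), Finset.mem_filter.2 ⟨h, rfl⟩, rfl⟩

lemma mem_posS {σ : Finset (ℕ × Bool)} {a : ℕ} : a ∈ posS σ ↔ ∃ b, (a, b) ∈ σ := by
  constructor
  · intro h
    obtain ⟨p, hp, rfl⟩ := Finset.mem_image.1 h
    exact ⟨p.2, hp⟩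
  · rintro ⟨b, hb⟩
    exact Finset.mem_image.2 ⟨(a, b), hb, rfl⟩

lemma posT_of_facet {d : ℕ} {u : ℕ → Bool} {σ : Finset (ℕ × Bool)}
    (hσ : σ ⊆ facetOf d u) {a : ℕ} (ha : a ∈ posS σ) : (a ∈ posT σ ↔ u a = true) := by
  constructor
  · intro h
    have := (mem_facetOf.1 (hσ (mem_posT.1 h))).2
    exact this.symm
  · intro h
    obtain ⟨b, hb⟩ := mem_posS.1 ha
    have : b = u a := (mem_facetOf.1 (hσ hb)).2
    rw [mem_posT]
    rwa [this, h] at hb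

lemma posS_subset_of_facet {d : ℕ} {u : ℕ → Bool} {σ : Finset (ℕ × Bool)}
    (hσ : σ ⊆ facetOf d u) : posS σ ⊆ Finset.Icc 1 d := by
  intro a ha
  obtain ⟨b, hb⟩ := mem_posS.1 ha
  exact (mem_facetOf.1 (hσ hb)).1

lemma chg_le_sw {d : ℕ} {u : ℕ → Bool} {σ : Finset (ℕ × Bool)}
    (hσ : σ ⊆ facetOf d u) : chg (posS σ) (posT σ) ≤ (sw d u).card := by
  classical
  apply Finset.card_le_card_of_injOn
    (fun pq => if h : ∃ j, pq.1 ≤ j ∧ j < pq.2 ∧ u j ≠ u (j + 1) then h.choose else 0)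
  · intro pq hpq
    obtain ⟨h1, h2, h3, h4, h5⟩ := mem_cset.1 hpq
    have hu : u pq.1 ≠ u pq.2 := by
      intro he
      apply h4
      rw [posT_of_facet hσ h1, posT_of_facet hσ h2, he]
    have hex : ∃ j, pq.1 ≤ j ∧ j < pq.2 ∧ u j ≠ u (j + 1) :=
      exists_switch h3.le hu
    beta_reduce
    rw [dif_pos hex]
    obtain ⟨hj1, hj2, hj3⟩ := hex.choose_spec
    have ha := Finset.mem_Icc.1 (posS_subset_of_facet hσ h1)
    have hb := Finset.mem_Icc.1 (posS_subset_of_facet hσ h2)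
    exact Finset.mem_filter.2 ⟨Finset.mem_Ico.2 ⟨by omega, by omega⟩, hj3⟩
  · intro pq hpq pq' hpq' heq
    simp only [Finset.mem_coe] at hpq hpq'
    obtain ⟨h1, h2, h3, h4, h5⟩ := mem_cset.1 hpq
    obtain ⟨h1', h2', h3', h4', h5'⟩ := mem_cset.1 hpq'
    have hu : u pq.1 ≠ u pq.2 := by
      intro he; exact h4 (by rw [posT_of_facet hσ h1, posT_of_facet hσ h2, he])
    have hu' : u pq'.1 ≠ u pq'.2 := by
      intro he; exact h4' (by rw [posT_of_facet hσ h1', posT_of_facet hσ h2', he])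
    have hex : ∃ j, pq.1 ≤ j ∧ j < pq.2 ∧ u j ≠ u (j + 1) := exists_switch h3.le hu
    have hex' : ∃ j, pq'.1 ≤ j ∧ j < pq'.2 ∧ u j ≠ u (j + 1) := exists_switch h3'.le hu'
    simp only [dif_pos hex, dif_pos hex'] at heq
    obtain ⟨hj1, hj2, hj3⟩ := hex.choose_spec
    obtain ⟨hj1', hj2', hj3'⟩ := hex'.choose_spec
    rw [heq] at hj1 hj2
    -- now pq'.1 ≤ j, pq.1 ≤ j (same j), j < pq.2, j < pq'.2
    have e1 : pq.1 = pq'.1 := by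
      by_contra hne
      rcases Nat.lt_or_ge pq.1 pq'.1 with h | h
      · exact h5 pq'.1 h1' ⟨h, by omega⟩
      · exact h5' pq.1 h1 ⟨by omega, by omega⟩
    have e2 : pq.2 = pq'.2 := by
      by_contra hne
      rcases Nat.lt_or_ge pq.2 pq'.2 with h | h
      · exact h5' pq.2 h2 ⟨by omega, h⟩
      · exact h5 pq'.2 h2' ⟨by omega, by omega⟩
    exact Prod.ext e1 e2

open Classical in
noncomputable def predS (S : Finset ℕ) (j : ℕ) : ℕ :=
  if h : (S.filter (· ≤ j)).Nonempty then (S.filter (· ≤ j)).max' h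
  else if h2 : S.Nonempty then S.min' h2 else 0

open Classical in
noncomputable def wordOf (S T : Finset ℕ) : ℕ → Bool := fun j => decide (predS S j ∈ T)

lemma predS_self {S : Finset ℕ} {a : ℕ} (ha : a ∈ S) : predS S a = a := by
  classical
  have hne : (S.filter (· ≤ a)).Nonempty := ⟨a, Finset.mem_filter.2 ⟨ha, le_refl a⟩⟩
  rw [predS, dif_pos hne]
  have h1 := Finset.mem_filter.1 ((S.filter (· ≤ a)).max'_mem hne)
  have h2 := Finset.le_max' (S.filter (· ≤ a)) a (Finset.mem_filter.2 ⟨ha, le_refl a⟩)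
  omega

lemma wordOf_mem {S T : Finset ℕ} {a : ℕ} (ha : a ∈ S) :
    wordOf S T a = decide (a ∈ T) := by
  rw [wordOf, predS_self ha]

lemma predS_switch {S : Finset ℕ} {j : ℕ} (h : predS S j ≠ predS S (j + 1)) :
    j + 1 ∈ S ∧ predS S j ∈ S ∧ predS S j ≤ j ∧ predS S (j+1) = j + 1 ∧
      ∀ r ∈ S, ¬ (predS S j < r ∧ r < j + 1) := by
  classical
  by_cases h1 : (S.filter (· ≤ j)).Nonempty
  · have h2 : (S.filter (· ≤ j + 1)).Nonempty := by
      obtain ⟨w, hw⟩ := h1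
      have := Finset.mem_filter.1 hw
      exact ⟨w, Finset.mem_filter.2 ⟨this.1, by omega⟩⟩
    have hm : predS S j = (S.filter (· ≤ j)).max' h1 := by rw [predS, dif_pos h1]
    have hm1 : predS S (j+1) = (S.filter (· ≤ j+1)).max' h2 := by rw [predS, dif_pos h2]
    have hjS : j + 1 ∈ S := by
      by_contra hjn
      apply h
      rw [hm, hm1]
      congr 1
      apply Finset.filter_congr
      intro x hx
      show x ≤ j ↔ x ≤ j + 1
      constructor
      · intro hh; omega
      · intro hh
        rcases Nat.lt_or_ge x (j+1) with hlt | hge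
        · omega
        · have : x = j + 1 := by omega
          subst this; exact absurd hx hjn
    have hmmem := Finset.mem_filter.1 ((S.filter (· ≤ j)).max'_mem h1)
    have hp1 : predS S (j+1) = j + 1 := by
      rw [hm1]
      have hle : (S.filter (· ≤ j+1)).max' h2 ≤ j + 1 :=
        (Finset.mem_filter.1 ((S.filter (· ≤ j+1)).max'_mem h2)).2
      have hge := Finset.le_max' (S.filter (· ≤ j+1)) (j+1) (Finset.mem_filter.2 ⟨hjS, le_refl _⟩)
      omega
    refine ⟨hjS, by rw [hm]; exact hmmem.1, by rw [hm]; exact hmmem.2, hp1, ?_⟩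
    intro r hr ⟨hr1, hr2⟩
    have : r ∈ S.filter (· ≤ j) := Finset.mem_filter.2 ⟨hr, by omega⟩
    have := Finset.le_max' (S.filter (· ≤ j)) r this
    rw [hm] at hr1; omega
  · exfalso
    by_cases h2 : (S.filter (· ≤ j + 1)).Nonempty
    · obtain ⟨w, hw⟩ := h2
      have hw' := Finset.mem_filter.1 hw
      have hwj : w = j + 1 := by
        rcases Nat.lt_or_ge j w with _ | hge
        · omega
        · exact absurd ⟨w, Finset.mem_filter.2 ⟨hw'.1, hge⟩⟩ h1
      subst hwj
      have hSne : S.Nonempty := ⟨_, hw'.1⟩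
      have e1 : predS S j = S.min' hSne := by rw [predS, dif_neg h1, dif_pos hSne]
      have h2' : (S.filter (· ≤ j + 1)).Nonempty := ⟨_, hw⟩
      have e2 : predS S (j+1) = (S.filter (· ≤ j+1)).max' h2' := by
        rw [predS, dif_pos h2']
      apply h
      rw [e1, e2]
      have hmin : S.min' hSne = j + 1 := by
        have hle := Finset.min'_le S _ hw'.1
        have : ∀ s ∈ S, j + 1 ≤ s := by
          intro s hs
          by_contra hc
          exact h1 ⟨s, Finset.mem_filter.2 ⟨hs, by omega⟩⟩
        have := this _ (S.min'_mem hSne)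
        omega
      have hmax : (S.filter (· ≤ j+1)).max' h2' = j + 1 := by
        have hle : (S.filter (· ≤ j+1)).max' h2' ≤ j + 1 :=
          (Finset.mem_filter.1 ((S.filter (· ≤ j+1)).max'_mem h2')).2
        have hge := Finset.le_max' (S.filter (· ≤ j+1)) (j+1) hw
        omega
      rw [hmin, hmax]
    · apply h
      rw [predS, predS, dif_neg h1, dif_neg h2]

lemma sw_wordOf_le {d : ℕ} {S T : Finset ℕ} :
    (sw d (wordOf S T)).card ≤ chg S T := by
  classical
  apply Finset.card_le_card_of_injOn (fun j => (predS S j, j + 1))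
  · intro j hj
    have hj' := Finset.mem_filter.1 hj
    have hne : predS S j ≠ predS S (j + 1) := by
      intro he
      exact hj'.2 (by rw [wordOf, wordOf, he])
    obtain ⟨hA, hB, hC, hD, hE⟩ := predS_switch hne
    apply mem_cset.2
    refine ⟨hB, hA, by dsimp only; omega, ?_, hE⟩
    intro hIff
    apply hj'.2
    rw [wordOf, wordOf, hD]
    simp only [decide_eq_decide]
    exact hIff
  · intro j _ j' _ heq
    have := congrArg Prod.snd heq
    simpa using this

lemma subset_facet_wordOf {d : ℕ} {σ : Finset (ℕ × Bool)}
    (hIcc : ∀ p ∈ σ, p.1 ∈ Finset.Icc 1 d)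
    (hfun : ∀ p ∈ σ, ∀ q ∈ σ, p.1 = q.1 → p = q) :
    σ ⊆ facetOf d (wordOf (posS σ) (posT σ)) := by
  intro p hp
  apply mem_facetOf.2
  refine ⟨hIcc p hp, ?_⟩
  have hpS : p.1 ∈ posS σ := mem_posS.2 ⟨p.2, by rwa [Prod.mk.eta]⟩
  have key : p.1 ∈ posT σ ↔ p.2 = true := by
    constructor
    · intro hT
      have := hfun p hp (p.1, true) (mem_posT.1 hT) rfl
      rw [this]
    · intro h
      apply mem_posT.2
      rwa [← h, Prod.mk.eta]
  rw [wordOf_mem hpS]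
  rcases Bool.eq_false_or_eq_true p.2 with h | h
  · rw [h]; symm; simp [key, h]
  · rw [h]; symm; simp [key, h]

lemma mem_facesB_iff {i d : ℕ} {σ : Finset (ℕ × Bool)} :
    σ ∈ facesB i d ↔ (∀ p ∈ σ, p.1 ∈ Finset.Icc 1 d) ∧
      (∀ p ∈ σ, ∀ q ∈ σ, p.1 = q.1 → p = q) ∧ chg (posS σ) (posT σ) ≤ i := by
  classical
  rw [facesB, Finset.mem_filter, Finset.mem_powerset]
  constructor
  · rintro ⟨hsub, u, hu, hσ⟩
    refine ⟨fun p hp => (mem_facetOf.1 (hσ hp)).1, ?_, le_trans (chg_le_sw hσ) hu⟩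
    intro p hp q hq he
    have h1 := (mem_facetOf.1 (hσ hp)).2
    have h2 := (mem_facetOf.1 (hσ hq)).2
    ext
    · exact he
    · rw [h1, h2, he]
  · rintro ⟨hIcc, hfun, hchg⟩
    refine ⟨?_, wordOf (posS σ) (posT σ), le_trans sw_wordOf_le hchg,
      subset_facet_wordOf hIcc hfun⟩
    intro p hp
    exact Finset.mem_product.2 ⟨hIcc p hp, Finset.mem_univ _⟩

open Classical in
noncomputable def cnt (S : Finset ℕ) (i : ℕ) : ℕ :=
  ((S.powerset).filter (fun T => chg S T ≤ i)).card

def g : ℕ → ℕ → ℕ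
  | _, 0 => 1
  | 0, _+1 => 2
  | i+1, k+1 => g (i+1) k + g i k

lemma cset_of_card_le_one {S T : Finset ℕ} (h : S.card ≤ 1) : cset S T = ∅ := by
  apply Finset.eq_empty_of_forall_notMem
  intro pq hpq
  obtain ⟨h1, h2, h3, _, _⟩ := mem_cset.1 hpq
  have : 1 < S.card := Finset.one_lt_card.2 ⟨pq.1, h1, pq.2, h2, by omega⟩
  omega

lemma chg_erase_max {S : Finset ℕ} (hS : S.Nonempty) (hS' : (S.erase (S.max' hS)).Nonempty)
    (T : Finset ℕ) :
    chg S T = chg (S.erase (S.max' hS)) (T.erase (S.max' hS)) +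
      (if ((S.erase (S.max' hS)).max' hS' ∈ T ↔ S.max' hS ∈ T) then 0 else 1) := by
  classical
  set m := S.max' hS with hm
  set S' := S.erase m with hSdef
  set m' := S'.max' hS' with hm'
  set T' := T.erase m with hT'
  have hmS : m ∈ S := S.max'_mem hS
  have hm'S' : m' ∈ S' := S'.max'_mem hS'
  have hm'S : m' ∈ S := Finset.mem_of_mem_erase hm'S'
  have hm'ne : m' ≠ m := Finset.ne_of_mem_erase hm'S'
  have hm'lt : m' < m := lt_of_le_of_ne (S.le_max' m' hm'S) hm'ne
  have hmax : ∀ s ∈ S, s ≤ m := fun s hs => S.le_max' s hs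
  have hmax' : ∀ s ∈ S', s ≤ m' := fun s hs => S'.le_max' s hs
  have hmem' : ∀ {x : ℕ}, x ∈ S' ↔ x ∈ S ∧ x ≠ m := by
    intro x; rw [hSdef, Finset.mem_erase, and_comm]
  have hmemT' : ∀ {x : ℕ}, x ∈ T' ↔ x ∈ T ∧ x ≠ m := by
    intro x; rw [hT', Finset.mem_erase, and_comm]
  have key : cset S T = if (m' ∈ T ↔ m ∈ T) then cset S' T'
      else insert (m', m) (cset S' T') := by
    ext pq
    rw [mem_cset]
    by_cases hag : (m' ∈ T ↔ m ∈ T) <;> simp only [hag, if_true, if_false, Finset.mem_insert]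
    · -- agree case: pq ∈ cset S T ↔ pq ∈ cset S' T'
      rw [mem_cset]
      constructor
      · rintro ⟨h1, h2, h3, h4, h5⟩
        have hc : pq.2 ≠ m := by
          intro he
          -- then pq.1 is the predecessor of m, i.e. m'
          have h1' : pq.1 ∈ S' := hmem'.2 ⟨h1, by omega⟩
          have : pq.1 = m' := by
            have := hmax' _ h1'
            rcases Nat.lt_or_ge pq.1 m' with hlt | hge
            · exact absurd ⟨hlt, by omega⟩ (h5 m' hm'S)
            · omega
          rw [this, he] at h4
          exact h4 hag
        have hc2 : pq.2 < m := lt_of_le_of_ne (hmax _ h2) hc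
        have ha : pq.1 ≠ m := by omega
        refine ⟨hmem'.2 ⟨h1, ha⟩, hmem'.2 ⟨h2, hc⟩, h3, ?_, ?_⟩
        · intro hIff; apply h4
          rw [show (pq.1 ∈ T) ↔ (pq.1 ∈ T ∧ pq.1 ≠ m) from by simp [ha],
              show (pq.2 ∈ T) ↔ (pq.2 ∈ T ∧ pq.2 ≠ m) from by simp [hc]]
          rw [← hmemT', ← hmemT']; exact hIff
        · intro r hr; exact h5 r (hmem'.1 hr).1
      · rintro ⟨h1, h2, h3, h4, h5⟩
        have ha := hmem'.1 h1
        have hc := hmem'.1 h2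
        refine ⟨ha.1, hc.1, h3, ?_, ?_⟩
        · intro hIff; apply h4
          rw [hmemT', hmemT']
          simp [ha.2, hc.2]; exact hIff
        · intro r hr hbet
          have hrm : r ≠ m := by
            have := hmax' _ h2
            omega
          exact h5 r (hmem'.2 ⟨hr, hrm⟩) hbet
    · -- disagree case
      constructor
      · rintro ⟨h1, h2, h3, h4, h5⟩
        by_cases hc : pq.2 = m
        · left
          have h1' : pq.1 ∈ S' := hmem'.2 ⟨h1, by omega⟩
          have he1 : pq.1 = m' := by
            have := hmax' _ h1'
            rcases Nat.lt_or_ge pq.1 m' with hlt | hge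
            · exact absurd ⟨hlt, by omega⟩ (h5 m' hm'S)
            · omega
          exact Prod.ext he1 hc
        · right
          rw [mem_cset]
          have hc2 : pq.2 < m := lt_of_le_of_ne (hmax _ h2) hc
          have ha : pq.1 ≠ m := by omega
          refine ⟨hmem'.2 ⟨h1, ha⟩, hmem'.2 ⟨h2, hc⟩, h3, ?_, ?_⟩
          · intro hIff; apply h4
            rw [show (pq.1 ∈ T) ↔ (pq.1 ∈ T ∧ pq.1 ≠ m) from by simp [ha],
                show (pq.2 ∈ T) ↔ (pq.2 ∈ T ∧ pq.2 ≠ m) from by simp [hc]]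
            rw [← hmemT', ← hmemT']; exact hIff
          · intro r hr; exact h5 r (hmem'.1 hr).1
      · rintro (he | hmem)
        · rw [he]
          refine ⟨hm'S, hmS, hm'lt, hag, ?_⟩
          intro r hr hbet
          have : r ∈ S' := hmem'.2 ⟨hr, by omega⟩
          have := hmax' _ this
          omega
        · rw [mem_cset] at hmem
          obtain ⟨h1, h2, h3, h4, h5⟩ := hmem
          have ha := hmem'.1 h1
          have hc := hmem'.1 h2
          refine ⟨ha.1, hc.1, h3, ?_, ?_⟩
          · intro hIff; apply h4
            rw [hmemT', hmemT']
            simp [ha.2, hc.2]; exact hIff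
          · intro r hr hbet
            have hrm : r ≠ m := by
              have := hmax' _ h2
              omega
            exact h5 r (hmem'.2 ⟨hr, hrm⟩) hbet
  show (cset S T).card = (cset S' T').card + (if (m' ∈ T ↔ m ∈ T) then 0 else 1)
  rw [key]
  by_cases hag : (m' ∈ T ↔ m ∈ T) <;> simp only [hag, if_true, if_false]
  · simp
  · rw [Finset.card_insert_of_notMem, Nat.add_comm]
    intro hmem
    exact (Finset.notMem_erase m S) (mem_cset.1 hmem).2.1

lemma card_filter_pair {α : Type*} [DecidableEq α] (P : α → Prop) [DecidablePred P]
    (a b : α) (hab : a ≠ b) :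
    (({a, b} : Finset α).filter P).card = (if P a then 1 else 0) + (if P b then 1 else 0) := by
  rw [Finset.filter_insert, Finset.filter_singleton]
  by_cases ha : P a <;> by_cases hb : P b <;>
    simp [ha, hb, Finset.card_insert_of_notMem, hab]

lemma cnt_rec {S : Finset ℕ} (hS : S.Nonempty) (hS' : (S.erase (S.max' hS)).Nonempty) (i : ℕ) :
    cnt S i = cnt (S.erase (S.max' hS)) i +
      (((S.erase (S.max' hS)).powerset).filter
        (fun T => chg (S.erase (S.max' hS)) T + 1 ≤ i)).card := by
  classical
  set m := S.max' hS with hm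
  set S' := S.erase m with hSdef
  set m' := S'.max' hS' with hm'
  have hmS : m ∈ S := S.max'_mem hS
  have hm'ne : m' ≠ m := Finset.ne_of_mem_erase (S'.max'_mem hS')
  rw [cnt, Finset.card_eq_sum_card_fiberwise
    (f := fun T => T.erase m) (t := S'.powerset)
    (fun T hT => Finset.mem_powerset.2 (Finset.erase_subset_erase m
      (Finset.mem_powerset.1 (Finset.mem_filter.1 hT).1)))]
  have fib : ∀ T' ∈ S'.powerset,
      ((S.powerset.filter (fun T => chg S T ≤ i)).filter (fun T => T.erase m = T'))
        = ({T', insert m T'} : Finset (Finset ℕ)).filter (fun T => chg S T ≤ i) := by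
    intro T' hT'
    have hT'S' : T' ⊆ S' := Finset.mem_powerset.1 hT'
    have hmT' : m ∉ T' := fun h => Finset.notMem_erase m S (hT'S' h)
    ext T
    simp only [Finset.mem_filter, Finset.mem_powerset, Finset.mem_insert,
      Finset.mem_singleton]
    constructor
    · rintro ⟨⟨hTS, hP⟩, he⟩
      refine ⟨?_, hP⟩
      by_cases hmT : m ∈ T
      · right; rw [← he, Finset.insert_erase hmT]
      · left; rw [← he, Finset.erase_eq_of_notMem hmT]
    · rintro ⟨(rfl | rfl), hP⟩
      · exact ⟨⟨hT'S'.trans (Finset.erase_subset m S), hP⟩,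
          Finset.erase_eq_of_notMem hmT'⟩
      · exact ⟨⟨Finset.insert_subset hmS (hT'S'.trans (Finset.erase_subset m S)), hP⟩,
          by rw [Finset.erase_insert hmT']⟩
  rw [Finset.sum_congr rfl (fun T' hT' => by rw [fib T' hT'])]
  have step : ∀ T' ∈ S'.powerset,
      (({T', insert m T'} : Finset (Finset ℕ)).filter (fun T => chg S T ≤ i)).card
        = (if chg S' T' ≤ i then 1 else 0) + (if chg S' T' + 1 ≤ i then 1 else 0) := by
    intro T' hT'
    have hT'S' : T' ⊆ S' := Finset.mem_powerset.1 hT'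
    have hmT' : m ∉ T' := fun h => Finset.notMem_erase m S (hT'S' h)
    have hne : T' ≠ insert m T' := fun h => hmT' (h ▸ Finset.mem_insert_self m T')
    rw [card_filter_pair _ _ _ hne]
    have e1 : chg S T' = chg S' T' + (if m' ∈ T' then 1 else 0) := by
      rw [chg_erase_max hS hS' T', Finset.erase_eq_of_notMem hmT']
      congr 1
      show (if (m' ∈ T' ↔ m ∈ T') then 0 else 1) = if m' ∈ T' then 1 else 0
      by_cases hm'T : m' ∈ T' <;> simp [hm'T, hmT']
    have e2 : chg S (insert m T') = chg S' T' + (if m' ∈ T' then 0 else 1) := by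
      rw [chg_erase_max hS hS' (insert m T'), Finset.erase_insert hmT']
      congr 1
      show (if (m' ∈ insert m T' ↔ m ∈ insert m T') then 0 else 1) = if m' ∈ T' then 0 else 1
      by_cases hm'T : m' ∈ T' <;>
        simp [hm'T, Finset.mem_insert, hm'ne, Finset.mem_insert_self]
    rw [e1, e2]
    by_cases hm'T : m' ∈ T' <;> simp [hm'T] <;> omega
  rw [Finset.sum_congr rfl step, Finset.sum_add_distrib]
  congr 1
  · rw [cnt, Finset.card_filter]
  · rw [Finset.card_filter]

lemma g_zero (i : ℕ) : g i 0 = 1 := by cases i <;> rfl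

lemma g_one (i : ℕ) : g i 1 = 2 := by
  cases i with
  | zero => rfl
  | succ i => show g (i+1) 0 + g i 0 = 2
              rw [g_zero, g_zero]

lemma cnt_eq_g : ∀ (n : ℕ) (i : ℕ) (S : Finset ℕ), S.card = n → cnt S i = g i n := by
  intro n
  induction n with
  | zero =>
    intro i S hS
    rw [Finset.card_eq_zero.1 hS, g_zero]
    rw [cnt]
    rw [Finset.powerset_empty]
    rw [Finset.filter_singleton]
    have : chg (∅ : Finset ℕ) (∅ : Finset ℕ) = 0 := by
      rw [chg, cset_of_card_le_one (by simp), Finset.card_empty]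
    simp [this]
  | succ n ih =>
    intro i S hS
    rcases Nat.eq_zero_or_pos n with rfl | hn
    · -- |S| = 1
      rw [g_one, cnt]
      have : ∀ T ∈ S.powerset, chg S T ≤ i := by
        intro T _
        rw [chg, cset_of_card_le_one (by omega), Finset.card_empty]
        omega
      rw [Finset.filter_true_of_mem this, Finset.card_powerset, hS]
      norm_num
    · have hSne : S.Nonempty := Finset.card_pos.1 (by omega)
      have hcard' : (S.erase (S.max' hSne)).card = n := by
        rw [Finset.card_erase_of_mem (S.max'_mem hSne), hS]
        omega
      have hS'ne : (S.erase (S.max' hSne)).Nonempty := Finset.card_pos.1 (by omega)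
      rw [cnt_rec hSne hS'ne i]
      rcases i with _ | i'
      · have hz : ((S.erase (S.max' hSne)).powerset).filter
            (fun T => chg (S.erase (S.max' hSne)) T + 1 ≤ 0) = ∅ := by
          apply Finset.filter_false_of_mem
          intro T _
          omega
        rw [hz, Finset.card_empty, ih 0 _ hcard']
        obtain ⟨n', rfl⟩ : ∃ n', n = n' + 1 := ⟨n - 1, by omega⟩
        rfl
      · have he : ((S.erase (S.max' hSne)).powerset).filter
            (fun T => chg (S.erase (S.max' hSne)) T + 1 ≤ i' + 1) =
            ((S.erase (S.max' hSne)).powerset).filter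
            (fun T => chg (S.erase (S.max' hSne)) T ≤ i') := by
          apply Finset.filter_congr
          intro T _
          constructor <;> omega
        rw [he]
        have : (((S.erase (S.max' hSne)).powerset).filter
            (fun T => chg (S.erase (S.max' hSne)) T ≤ i')).card = cnt (S.erase (S.max' hSne)) i' := rfl
        rw [this, ih (i'+1) _ hcard', ih i' _ hcard']
        rfl

lemma snd_eq_decide {σ : Finset (ℕ × Bool)}
    (hfun : ∀ p ∈ σ, ∀ q ∈ σ, p.1 = q.1 → p = q) {p : ℕ × Bool} (hp : p ∈ σ) :
    p.2 = decide (p.1 ∈ posT σ) := by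
  classical
  have key : p.1 ∈ posT σ ↔ p.2 = true := by
    constructor
    · intro hT
      have := hfun p hp (p.1, true) (mem_posT.1 hT) rfl
      rw [this]
    · intro h
      apply mem_posT.2
      rwa [← h, Prod.mk.eta]
  rcases Bool.eq_false_or_eq_true p.2 with h | h <;> rw [h] <;> symm <;> simp [key, h]

lemma sigma_eq_image {σ : Finset (ℕ × Bool)}
    (hfun : ∀ p ∈ σ, ∀ q ∈ σ, p.1 = q.1 → p = q) :
    σ = (posS σ).image (fun a => (a, decide (a ∈ posT σ))) := by
  classical
  ext p
  constructor
  · intro hp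
    apply Finset.mem_image.2
    refine ⟨p.1, mem_posS.2 ⟨p.2, by rwa [Prod.mk.eta]⟩, ?_⟩
    exact Prod.ext rfl (snd_eq_decide hfun hp).symm
  · intro hp
    obtain ⟨a, ha, he⟩ := Finset.mem_image.1 hp
    obtain ⟨b, hb⟩ := mem_posS.1 ha
    have : b = decide (a ∈ posT σ) := snd_eq_decide hfun hb
    rw [← he, ← this]
    exact hb

lemma posS_image {S T : Finset ℕ} :
    posS (S.image (fun a => (a, decide (a ∈ T)))) = S := by
  classical
  rw [posS, Finset.image_image]
  exact Finset.image_id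

lemma posT_image {S T : Finset ℕ} (hTS : T ⊆ S) :
    posT (S.image (fun a => (a, decide (a ∈ T)))) = T := by
  classical
  ext a
  rw [mem_posT, Finset.mem_image]
  constructor
  · rintro ⟨x, hx, he⟩
    have h1 : x = a := congrArg Prod.fst he
    have h2 : decide (x ∈ T) = true := congrArg Prod.snd he
    subst h1
    simpa using h2
  · intro ha
    exact ⟨a, hTS ha, by simp [ha]⟩

lemma card_image_decide {S T : Finset ℕ} :
    (S.image (fun a => (a, decide (a ∈ T)))).card = S.card := by
  classical
  apply Finset.card_image_of_injOn
  intro a _ b _ h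
  exact congrArg Prod.fst h

lemma fiber_card {i d k : ℕ} {S : Finset ℕ}
    (hS : S ∈ (Finset.Icc 1 d).powersetCard k) :
    (((facesB i d).filter (fun σ => σ.card = k)).filter (fun σ => posS σ = S)).card
      = cnt S i := by
  classical
  obtain ⟨hSsub, hScard⟩ := Finset.mem_powersetCard.1 hS
  rw [cnt]
  apply Finset.card_bij' (fun σ _ => posT σ)
    (fun T _ => S.image (fun a => (a, decide (a ∈ T))))
  · intro σ hσ
    have hmem := Finset.mem_filter.1 hσ
    have hposS : posS σ = S := hmem.2
    obtain ⟨hIcc, hfun, hchg⟩ := mem_facesB_iff.1 (Finset.mem_filter.1 hmem.1).1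
    apply Finset.mem_filter.2
    constructor
    · apply Finset.mem_powerset.2
      intro a ha
      rw [← hposS]
      exact mem_posS.2 ⟨true, mem_posT.1 ha⟩
    · rwa [← hposS]
  · intro T hT
    have hT' := Finset.mem_filter.1 hT
    have hTS : T ⊆ S := Finset.mem_powerset.1 hT'.1
    apply Finset.mem_filter.2
    refine ⟨Finset.mem_filter.2 ⟨?_, ?_⟩, posS_image⟩
    · apply mem_facesB_iff.2
      refine ⟨?_, ?_, ?_⟩
      · intro p hp
        obtain ⟨a, ha, he⟩ := Finset.mem_image.1 hp
        rw [← he]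
        exact hSsub ha
      · intro p hp q hq he
        obtain ⟨a, ha, hea⟩ := Finset.mem_image.1 hp
        obtain ⟨b, hb, heb⟩ := Finset.mem_image.1 hq
        rw [← hea, ← heb] at he ⊢
        simp only at he
        rw [he]
      · rw [posS_image, posT_image hTS]
        exact hT'.2
    · rw [card_image_decide, hScard]
  · intro σ hσ
    have hmem := Finset.mem_filter.1 hσ
    have hposS : posS σ = S := hmem.2
    obtain ⟨hIcc, hfun, hchg⟩ := mem_facesB_iff.1 (Finset.mem_filter.1 hmem.1).1
    rw [← hposS]
    exact (sigma_eq_image hfun).symm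
  · intro T hT
    exact posT_image (Finset.mem_powerset.1 (Finset.mem_filter.1 hT).1)

lemma fB_eq {i d k : ℕ} : fB i d k = d.choose k * g i k := by
  classical
  rw [fB, Finset.card_eq_sum_card_fiberwise
    (f := posS) (t := (Finset.Icc 1 d).powersetCard k) ?_]
  · rw [Finset.sum_congr rfl (fun S hS => by
      rw [fiber_card hS, cnt_eq_g k i S (Finset.mem_powersetCard.1 hS).2])]
    rw [Finset.sum_const, Finset.card_powersetCard, Nat.card_Icc, smul_eq_mul]
    norm_num
  · intro σ hσ
    have hmem := Finset.mem_filter.1 hσ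
    obtain ⟨hIcc, hfun, hchg⟩ := mem_facesB_iff.1 hmem.1
    apply Finset.mem_powersetCard.2
    constructor
    · intro a ha
      obtain ⟨b, hb⟩ := mem_posS.1 ha
      exact hIcc (a, b) hb
    · rw [posS, Finset.card_image_of_injOn, hmem.2]
      intro p hp q hq he
      exact hfun p hp q hq he

def eps (i j : ℕ) : ℤ := if j ≤ i + 1 then 1 else (-1)^(j - i - 1)

def E (i k : ℕ) : ℤ := ∑ j ∈ Finset.range (k+1), eps i j * (k.choose j : ℤ)

lemma eps_succ (i j : ℕ) : eps (i+1) (j+1) = eps i j := by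
  unfold eps
  by_cases h : j ≤ i + 1
  · rw [if_pos (by omega), if_pos h]
  · rw [if_neg (by omega), if_neg h, show j + 1 - (i + 1) - 1 = j - i - 1 from by omega]

lemma eps_zero' (j : ℕ) : eps 0 j = (-1)^(j-1) := by
  rcases j with _ | j
  · simp [eps]
  · rcases j with _ | j
    · simp [eps]
    · rw [eps, if_neg (by omega)]
      norm_num

lemma E_zero_succ (k : ℕ) : E 0 (k+1) = 2 := by
  set n := k + 1 with hn
  have halt : ∑ j ∈ Finset.range (n+1), (-1 : ℤ)^j * (n.choose j : ℤ) = 0 := by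
    rw [Int.alternating_sum_range_choose]
    simp [hn]
  rw [Finset.sum_range_succ' _ n] at halt
  have h2 : ∑ j ∈ Finset.range n, (-1 : ℤ)^(j+1) * (n.choose (j+1) : ℤ)
      = -∑ j ∈ Finset.range n, (-1 : ℤ)^j * (n.choose (j+1) : ℤ) := by
    rw [← Finset.sum_neg_distrib]
    apply Finset.sum_congr rfl
    intro j _
    ring
  rw [h2] at halt
  simp only [pow_zero, Nat.choose_zero_right, Nat.cast_one, mul_one] at halt
  have key : ∑ j ∈ Finset.range n, (-1 : ℤ)^j * (n.choose (j+1) : ℤ) = 1 := by linarith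
  rw [E, Finset.sum_range_succ' _ n]
  have h3 : ∑ j ∈ Finset.range n, eps 0 (j+1) * (n.choose (j+1) : ℤ)
      = ∑ j ∈ Finset.range n, (-1 : ℤ)^j * (n.choose (j+1) : ℤ) := by
    apply Finset.sum_congr rfl
    intro j _
    rw [eps_zero']
    norm_num
  rw [h3, key, eps_zero']
  norm_num

lemma E_succ_succ (i k : ℕ) : E (i+1) (k+1) = E (i+1) k + E i k := by
  have lhs : E (i+1) (k+1) =
      (∑ j ∈ Finset.range (k+1), eps i j * ((k.choose j : ℤ) + (k.choose (j+1) : ℤ))) + 1 := by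
    rw [E, Finset.sum_range_succ' _ (k+1)]
    have h0 : eps (i+1) 0 * (((k+1).choose 0 : ℕ) : ℤ) = 1 := by simp [eps]
    rw [h0]
    congr 1
    apply Finset.sum_congr rfl
    intro j _
    rw [eps_succ, Nat.choose_succ_succ, Nat.cast_add]
  have rhs1 : E (i+1) k = (∑ j ∈ Finset.range k, eps i j * (k.choose (j+1) : ℤ)) + 1 := by
    rw [E, Finset.sum_range_succ' _ k]
    have h0 : eps (i+1) 0 * ((k.choose 0 : ℕ) : ℤ) = 1 := by simp [eps]
    rw [h0]
    congr 1
    apply Finset.sum_congr rfl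
    intro j _
    rw [eps_succ]
  have hsplit : ∑ j ∈ Finset.range (k+1), eps i j * (k.choose (j+1) : ℤ)
      = ∑ j ∈ Finset.range k, eps i j * (k.choose (j+1) : ℤ) := by
    rw [Finset.sum_range_succ, Nat.choose_succ_self]
    simp
  rw [lhs, rhs1]
  have hdistrib : ∑ j ∈ Finset.range (k+1), eps i j * ((k.choose j : ℤ) + (k.choose (j+1) : ℤ))
      = E i k + ∑ j ∈ Finset.range (k+1), eps i j * (k.choose (j+1) : ℤ) := by
    rw [E, ← Finset.sum_add_distrib]
    apply Finset.sum_congr rfl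
    intro j _
    ring
  rw [hdistrib, hsplit]
  ring

lemma E_eq_g (i k : ℕ) : E i k = (g i k : ℤ) := by
  induction k generalizing i with
  | zero => simp [E, eps, g_zero]
  | succ k ih =>
    cases i with
    | zero => rw [E_zero_succ]; rfl
    | succ i =>
      rw [E_succ_succ, ih, ih]
      show _ = ((g (i+1) k + g i k : ℕ) : ℤ)
      push_cast
      ring

lemma fB_int {i d k : ℕ} (hkd : k ≤ d) :
    (fB i d k : ℤ) = ∑ j ∈ Finset.range (k+1),
      eps i j * (d.choose j : ℤ) * (((d-j).choose (k-j) : ℕ) : ℤ) := by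
  rw [fB_eq, Nat.cast_mul, ← E_eq_g, E, Finset.mul_sum]
  apply Finset.sum_congr rfl
  intro j hj
  have hjk : j ≤ k := by
    have := Finset.mem_range.1 hj
    omega
  have := Nat.choose_mul (n := d) hjk
  have hcast : (d.choose k : ℤ) * (k.choose j : ℤ) =
      (d.choose j : ℤ) * (((d-j).choose (k-j) : ℕ) : ℤ) := by
    rw [← Nat.cast_mul, ← Nat.cast_mul, this]
  calc (d.choose k : ℤ) * (eps i j * (k.choose j : ℤ))
      = eps i j * ((d.choose k : ℤ) * (k.choose j : ℤ)) := by ring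
    _ = eps i j * ((d.choose j : ℤ) * (((d-j).choose (k-j) : ℕ) : ℤ)) := by rw [hcast]
    _ = eps i j * (d.choose j : ℤ) * (((d-j).choose (k-j) : ℕ) : ℤ) := by ring

open Polynomial in
lemma X_pow_eq (n : ℕ) : (X : ℤ[X])^n =
    ∑ t ∈ Finset.range (n+1), C (((n.choose t : ℕ)) : ℤ) * (X - 1)^(n - t) := by
  have h1 : (X : ℤ[X])^n = ((X - 1) + 1)^n := by ring_nf
  rw [h1, add_pow, ← Finset.sum_range_reflect]
  apply Finset.sum_congr rfl
  intro t ht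
  have htn : t ≤ n := by
    have := Finset.mem_range.1 ht
    omega
  rw [show n + 1 - 1 - t = n - t from by omega, one_pow, mul_one,
    Nat.choose_symm htn, mul_comm]
  simp



open Polynomial in
/-- The `h`-numbers of `B(i,d)` (defined by the polynomial relation
`∑ h_j x^{d-j} = ∑ f_{j-1} (x-1)^{d-j}`) are `h_j = C(d,j)` for `j ≤ i+1` and
`h_j = (-1)^{j-i-1} C(d,j)` for `j > i+1`. -/
theorem stmt12 (d i : ℕ) (hd : 1 ≤ d) (hi : i ≤ d - 1) :
    ∑ j ∈ Finset.range (d + 1),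
        C (if j ≤ i + 1 then (d.choose j : ℤ)
           else (-1) ^ (j - i - 1) * d.choose j) * X ^ (d - j) =
      ∑ j ∈ Finset.range (d + 1),
        C (fB i d j : ℤ) * (X - 1) ^ (d - j) := by

  classical
  have hL : ∑ j ∈ Finset.range (d+1), C (if j ≤ i + 1 then (d.choose j : ℤ)
      else (-1) ^ (j - i - 1) * d.choose j) * X ^ (d - j)
      = ∑ j ∈ Finset.range (d+1), C (eps i j * (d.choose j : ℤ)) * X ^ (d - j) := by
    apply Finset.sum_congr rfl
    intro j _
    congr 2
    unfold eps
    split <;> ring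
  rw [hL]
  symm
  calc ∑ k ∈ Finset.range (d+1), C (fB i d k : ℤ) * (X - 1) ^ (d - k)
      = ∑ k ∈ Finset.range (d+1), ∑ j ∈ Finset.range (d+1),
          (if j ≤ k then C (eps i j * (d.choose j : ℤ) * (((d-j).choose (k-j) : ℕ) : ℤ))
            * (X - 1)^(d-k) else 0) := by
        apply Finset.sum_congr rfl
        intro k hk
        have hkd : k ≤ d := by
          have := Finset.mem_range.1 hk
          omega
        rw [fB_int hkd, map_sum, Finset.sum_mul]
        have hfil : (Finset.range (d+1)).filter (fun j => j ≤ k) = Finset.range (k+1) := by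
          ext x
          simp only [Finset.mem_filter, Finset.mem_range]
          omega
        rw [← hfil, Finset.sum_filter]
    _ = ∑ j ∈ Finset.range (d+1), ∑ k ∈ Finset.range (d+1),
          (if j ≤ k then C (eps i j * (d.choose j : ℤ) * (((d-j).choose (k-j) : ℕ) : ℤ))
            * (X - 1)^(d-k) else 0) := Finset.sum_comm
    _ = ∑ j ∈ Finset.range (d+1), C (eps i j * (d.choose j : ℤ)) * X ^ (d - j) := by
        apply Finset.sum_congr rfl
        intro j hj
        have hjd : j ≤ d := by
          have := Finset.mem_range.1 hj
          omega
        have hfil : (Finset.range (d+1)).filter (fun k => j ≤ k) = Finset.Ico j (d+1) := by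
          ext x
          simp only [Finset.mem_filter, Finset.mem_range, Finset.mem_Ico]
          omega
        rw [← Finset.sum_filter, hfil, Finset.sum_Ico_eq_sum_range,
          show d + 1 - j = (d - j) + 1 from by omega,
          X_pow_eq (d - j), Finset.mul_sum]
        apply Finset.sum_congr rfl
        intro t ht
        rw [show j + t - j = t from by omega, show d - (j + t) = (d - j) - t from by omega,
          map_mul]
        ring
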